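/- With γ = 1 − α/[W⁻¹ P e_j]_j, the point γ e_j satisfies the first-order optimality condition of J(x) = ½‖P x − P e_j‖₂² + α‖W x‖₁: namely (1/α) W⁻¹ P(e_j − γ e_j) lies in the subdifferential of the ℓ¹ norm at W(γ e_j). -/

import Mathlib

open Matrix Finset

noncomputable def euclNorm {n : ℕ} (v : Fin n → ℝ) : ℝ := Real.sqrt (∑ i, v i ^ 2)

noncomputable def wInvP {n : ℕ} (P : Matrix (Fin n) (Fin n) ℝ) (j i : Fin n) : ℝ :=
  P.mulVec (Pi.single j 1) i / euclNorm (P.mulVec (Pi.single i 1))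

/-- With `γ = 1 − α/[W⁻¹ P e_j]_j`, the point `γ • e_j` satisfies the first-order
optimality condition: `(1/α) W⁻¹ P (e_j − γ e_j)` lies in the subdifferential of the ℓ¹-norm at
`W (γ e_j)` (componentwise: equal to the sign where the component is nonzero, in `[−1,1]` where it
vanishes). -/
theorem first_order_optimality {n : ℕ}
    (P : Matrix (Fin n) (Fin n) ℝ) (hsymm : Pᵀ = P) (hidem : P * P = P)
    (hnz : ∀ i : Fin n, P.mulVec (Pi.single i 1) ≠ 0)
    (j : Fin n)
    (hpar : ∀ i : Fin n, i ≠ j → ∀ c : ℝ,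
      P.mulVec (Pi.single j 1) ≠ c • P.mulVec (Pi.single i 1))
    (α : ℝ) (hα0 : 0 < α) (hα1 : α < wInvP P j j) :
    ∀ i : Fin n,
      (((1 - α / wInvP P j j) • (Pi.single j 1 : Fin n → ℝ)) i ≠ 0 →
        (1 / α) * (P.mulVec ((Pi.single j 1 : Fin n → ℝ) -
            (1 - α / wInvP P j j) • (Pi.single j 1 : Fin n → ℝ)) i /
              euclNorm (P.mulVec (Pi.single i 1))) =
          Real.sign ((euclNorm (P.mulVec (Pi.single i 1))) *
            (((1 - α / wInvP P j j) • (Pi.single j 1 : Fin n → ℝ)) i))) ∧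
      (((1 - α / wInvP P j j) • (Pi.single j 1 : Fin n → ℝ)) i = 0 →
        (1 / α) * (P.mulVec ((Pi.single j 1 : Fin n → ℝ) -
            (1 - α / wInvP P j j) • (Pi.single j 1 : Fin n → ℝ)) i /
              euclNorm (P.mulVec (Pi.single i 1))) ∈ Set.Icc (-1 : ℝ) 1) := by
  -- basic facts
  have hentry : ∀ i k : Fin n, P.mulVec (Pi.single i 1) k = P k i := by
    intro i k; simp [mulVec_single]
  -- enorm of v i is positive
  have hsumpos : ∀ i : Fin n, 0 < ∑ k, P.mulVec (Pi.single i 1) k ^ 2 := by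
    intro i
    have h0 : 0 ≤ ∑ k, P.mulVec (Pi.single i 1) k ^ 2 :=
      Finset.sum_nonneg fun k _ => sq_nonneg _
    rcases h0.lt_or_eq with h | h
    · exact h
    · exfalso
      apply hnz i
      funext k
      have := (Finset.sum_eq_zero_iff_of_nonneg (fun k _ => sq_nonneg
        (P.mulVec (Pi.single i 1) k))).mp h.symm k (Finset.mem_univ k)
      exact pow_eq_zero_iff (two_ne_zero) |>.mp this
  have hepos : ∀ i : Fin n, 0 < euclNorm (P.mulVec (Pi.single i 1)) := by
    intro i; exact Real.sqrt_pos.mpr (hsumpos i)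
  -- key inner product identity: P i j = ∑ k, P k i * P k j
  have hinner : ∀ i : Fin n, P i j = ∑ k, P k i * P k j := by
    intro i
    have : (Pᵀ * P) i j = P i j := by rw [hsymm, hidem]
    rw [← this, Matrix.mul_apply]
    simp [Matrix.transpose_apply]
  -- (P e_j)_j = ∑ (P e_j)_k ^2 so wInvP j j = enorm (P e_j)
  have hjj : P.mulVec (Pi.single j 1) j = ∑ k, P.mulVec (Pi.single j 1) k ^ 2 := by
    rw [hentry j j, hinner j]
    apply Finset.sum_congr rfl
    intro k _; rw [hentry, sq]
  have hw : wInvP P j j = euclNorm (P.mulVec (Pi.single j 1)) := by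
    unfold wInvP
    rw [hjj, euclNorm]
    rw [div_eq_iff (ne_of_gt (Real.sqrt_pos.mpr (hsumpos j)))]
    exact (Real.mul_self_sqrt (le_of_lt (hsumpos j))).symm
  have hwpos : 0 < wInvP P j j := lt_trans hα0 hα1
  set w := wInvP P j j with hwdef
  set γ : ℝ := 1 - α / w with hγdef
  have hγpos : 0 < γ := by
    have : α / w < 1 := (div_lt_one hwpos).mpr hα1
    simp [hγdef]; linarith
  -- P.mulVec (e_j - γ e_j) = (α/w) • P.mulVec e_j
  have hvec : ∀ i : Fin n, P.mulVec ((Pi.single j 1 : Fin n → ℝ) - γ • (Pi.single j 1 : Fin n → ℝ)) i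
      = (α / w) * P.mulVec (Pi.single j 1) i := by
    intro i
    rw [Matrix.mulVec_sub, Matrix.mulVec_smul]
    simp [Pi.sub_apply, hγdef]
    ring
  intro i
  by_cases hij : i = j
  · subst hij
    constructor
    · intro _
      rw [hvec i]
      have h1 : P.mulVec (Pi.single i 1) i / euclNorm (P.mulVec (Pi.single i 1)) = w := rfl
      rw [mul_div_assoc, h1]
      have : (1 / α) * ((α / w) * w) = 1 := by
        field_simp
      rw [this]
      have hγi : ((γ • (Pi.single i 1 : Fin n → ℝ)) i) = γ := by simp
      rw [hγi]
      rw [Real.sign_of_pos (mul_pos (hepos i) hγpos)]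
    · intro h0
      exfalso
      have : ((γ • (Pi.single i 1 : Fin n → ℝ)) i) = γ := by simp
      rw [this] at h0
      exact (ne_of_gt hγpos) h0
  · constructor
    · intro hne
      exfalso
      apply hne
      simp [Pi.single_eq_of_ne hij]
    · intro _
      rw [hvec i]
      -- |P.mulVec e_j i| ≤ enorm(v i) * enorm(v j) by Cauchy-Schwarz
      have hcs : |P.mulVec (Pi.single j 1) i| ≤
          euclNorm (P.mulVec (Pi.single i 1)) * euclNorm (P.mulVec (Pi.single j 1)) := by
        have heq : P.mulVec (Pi.single j 1) i =
            ∑ k, P.mulVec (Pi.single i 1) k * P.mulVec (Pi.single j 1) k := by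
          rw [hentry j i, hinner i]
          apply Finset.sum_congr rfl
          intro k _; rw [hentry, hentry]
        rw [heq]
        have := Finset.sum_mul_sq_le_sq_mul_sq Finset.univ
          (fun k => P.mulVec (Pi.single i 1) k) (fun k => P.mulVec (Pi.single j 1) k)
        calc |∑ k, P.mulVec (Pi.single i 1) k * P.mulVec (Pi.single j 1) k|
            = Real.sqrt ((∑ k, P.mulVec (Pi.single i 1) k * P.mulVec (Pi.single j 1) k)^2) := by
              rw [Real.sqrt_sq_eq_abs]
          _ ≤ Real.sqrt ((∑ k, P.mulVec (Pi.single i 1) k ^ 2) *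
                (∑ k, P.mulVec (Pi.single j 1) k ^ 2)) := Real.sqrt_le_sqrt this
          _ = _ := by
              rw [Real.sqrt_mul (le_of_lt (hsumpos i))]; rfl
      -- value = (1/α)*(α/w)* (P e_j i) / enorm(v i) = (1/w) * (P e_j i / enorm (v i))
      have hval : (1 / α) * ((α / w) * P.mulVec (Pi.single j 1) i /
          euclNorm (P.mulVec (Pi.single i 1))) =
          P.mulVec (Pi.single j 1) i / (euclNorm (P.mulVec (Pi.single i 1)) * w) := by
        field_simp
      rw [hval]
      rw [Set.mem_Icc, ← abs_le, abs_div, abs_of_pos (mul_pos (hepos i) hwpos)]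
      rw [div_le_one (mul_pos (hepos i) hwpos)]
      rw [hw]
      exact hcs
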